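/- The Yamazaki factorization map Y: Z²(S×T, Γ) → Z²(S, Γ) × Z²(T, Γ) × P(S,T,Γ), sending μ to (μ|_S, μ|_T, α_μ) where α_μ(s,t) = μ((s,e),(e,t))/μ((e,t),(s,e)), is a surjective group homomorphism for any monoids S, T and abelian group Γ. -/

import Mathlib

/-- A 2-cocycle on a monoid `M` with values in an abelian group `Γ` (trivial action). -/
def IsCocycle {M Γ : Type*} [Monoid M] [CommGroup Γ] (μ : M → M → Γ) : Prop :=
  (∀ x y z, μ x (y * z) * μ y z = μ x y * μ (x * y) z) ∧
    (∀ x, μ x 1 = 1) ∧ (∀ x, μ 1 x = 1)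

/-- The group of 2-cocycles `Z²(M, Γ)` under pointwise multiplication. -/
def Z2 (M Γ : Type*) [Monoid M] [CommGroup Γ] : Subgroup (M → M → Γ) where
  carrier := {μ | IsCocycle μ}
  mul_mem' := by
    rintro μ ν ⟨h1, h2, h3⟩ ⟨g1, g2, g3⟩
    refine ⟨fun x y z => ?_, fun x => ?_, fun x => ?_⟩ <;>
      simp only [Pi.mul_apply, h2, h3, g2, g3, mul_one]
    rw [mul_mul_mul_comm, h1 x y z, g1 x y z, mul_mul_mul_comm]
  one_mem' := ⟨fun x y z => by simp, fun x => rfl, fun x => rfl⟩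
  inv_mem' := by
    rintro μ ⟨h1, h2, h3⟩
    refine ⟨fun x y z => ?_, fun x => ?_, fun x => ?_⟩ <;>
      simp only [Pi.inv_apply, h2, h3, inv_one]
    rw [← mul_inv, h1 x y z, mul_inv]

/-- A 2-coboundary: `δh(x,y) = h(x)h(y)/h(xy)` for some `h` with `h(1)=1`. -/
def IsCoboundary {M Γ : Type*} [Monoid M] [CommGroup Γ] (μ : M → M → Γ) : Prop :=
  ∃ h : M → Γ, h 1 = 1 ∧ ∀ x y, μ x y = h x * h y / h (x * y)

/-- The group of 2-coboundaries `B²(M, Γ)`. -/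
def B2 (M Γ : Type*) [Monoid M] [CommGroup Γ] : Subgroup (M → M → Γ) where
  carrier := {μ | IsCoboundary μ}
  mul_mem' := by
    rintro μ ν ⟨h, h1, h2⟩ ⟨g, g1, g2⟩
    refine ⟨h * g, by simp [h1, g1], fun x y => ?_⟩
    simp only [Pi.mul_apply, h2, g2]
    rw [div_mul_div_comm, mul_mul_mul_comm]
  one_mem' := ⟨1, rfl, fun x y => by simp⟩
  inv_mem' := by
    rintro μ ⟨h, h1, h2⟩
    refine ⟨h⁻¹, by simp [h1], fun x y => ?_⟩
    simp only [Pi.inv_apply, h2]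
    rw [div_eq_mul_inv, div_eq_mul_inv, mul_inv, mul_inv, inv_inv]

instance {M Γ : Type*} [Monoid M] [CommGroup Γ] :
    ((B2 M Γ).subgroupOf (Z2 M Γ)).Normal := Subgroup.normal_of_comm _

/-- Second cohomology `H²(M,Γ) = Z²(M,Γ)/B²(M,Γ)` of a monoid with trivial coefficients. -/
def H2 (M Γ : Type*) [Monoid M] [CommGroup Γ] :=
  Z2 M Γ ⧸ (B2 M Γ).subgroupOf (Z2 M Γ)

instance {M Γ : Type*} [Monoid M] [CommGroup Γ] : CommGroup (H2 M Γ) :=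
  inferInstanceAs (CommGroup (Z2 M Γ ⧸ (B2 M Γ).subgroupOf (Z2 M Γ)))

/-- Restriction of a cocycle on `S × T` to the submonoid `S × {1}`. -/
def resFst {S T Γ : Type*} [Monoid S] [Monoid T] [CommGroup Γ]
    (μ : Z2 (S × T) Γ) : Z2 S Γ := by
  refine ⟨fun s s' => μ.1 (s, 1) (s', 1), ?_, fun x => ?_, fun x => ?_⟩
  · intro x y z
    have := μ.2.1 (x, 1) (y, 1) (z, 1)
    simpa using this
  · exact μ.2.2.1 (x, 1)
  · exact μ.2.2.2 (x, 1)

/-- Restriction of a cocycle on `S × T` to the submonoid `{1} × T`. -/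
def resSnd {S T Γ : Type*} [Monoid S] [Monoid T] [CommGroup Γ]
    (μ : Z2 (S × T) Γ) : Z2 T Γ := by
  refine ⟨fun t t' => μ.1 (1, t) (1, t'), ?_, fun x => ?_, fun x => ?_⟩
  · intro x y z
    have := μ.2.1 (1, x) (1, y) (1, z)
    simpa using this
  · exact μ.2.2.1 (1, x)
  · exact μ.2.2.2 (1, x)

/-- The group of bimultiplicative pairings `P(S,T,Γ)`. -/
def Pairings (S T Γ : Type*) [Monoid S] [Monoid T] [CommGroup Γ] :
    Subgroup (S → T → Γ) where
  carrier := {α | (∀ s s' t, α (s * s') t = α s t * α s' t) ∧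
    (∀ s t t', α s (t * t') = α s t * α s t')}
  mul_mem' := by
    rintro α β ⟨a1, a2⟩ ⟨b1, b2⟩
    constructor <;> intro s s' t <;>
      simp only [Pi.mul_apply, a1, a2, b1, b2, mul_mul_mul_comm]
  one_mem' := ⟨fun _ _ _ => by simp, fun _ _ _ => by simp⟩
  inv_mem' := by
    rintro α ⟨a1, a2⟩
    constructor <;> intro s s' t <;>
      simp only [Pi.inv_apply, a1, a2, mul_inv]

/-- The Yamazaki factorization map `Y : Z²(S×T,Γ) → Z²(S,Γ) × Z²(T,Γ) × P(S,T,Γ)`, sending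
`μ` to `(μ|_S, μ|_T, α_μ)` with `α_μ(s,t) = μ((s,1),(1,t))/μ((1,t),(s,1))`, is a surjective
group homomorphism: it is multiplicative, lands in pairings, and hits every triple of a
cocycle on `S`, a cocycle on `T`, and a bimultiplicative pairing. -/
private theorem pair_lemma {M Γ : Type*} [Monoid M] [CommGroup Γ] {μ : M → M → Γ}
    (h : IsCocycle μ) {a b c : M} (hac : a * c = c * a) (hbc : b * c = c * b) :
    μ (a * b) c / μ c (a * b) = (μ a c / μ c a) * (μ b c / μ c b) := by
  have E1 := h.1 a b c
  have E2 := h.1 a c b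
  have E3 := h.1 c a b
  rw [hbc] at E1
  rw [hac] at E2
  have key : μ (a * b) c * (μ c a * μ c b) = μ c (a * b) * (μ a c * μ b c) := by
    apply mul_left_cancel (a := μ a b * μ a (c * b))
    calc μ a b * μ a (c * b) * (μ (a * b) c * (μ c a * μ c b))
        = (μ a b * μ (a * b) c) * ((μ a (c * b) * μ c b) * μ c a) := by ac_rfl
      _ = (μ a (c * b) * μ b c) * ((μ a c * μ (c * a) b) * μ c a) := by rw [← E1, E2]
      _ = (μ a (c * b) * μ b c) * (μ a c * (μ c a * μ (c * a) b)) := by ac_rfl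
      _ = (μ a (c * b) * μ b c) * (μ a c * (μ c (a * b) * μ a b)) := by rw [← E3]
      _ = μ a b * μ a (c * b) * (μ c (a * b) * (μ a c * μ b c)) := by ac_rfl
  rw [div_mul_div_comm, div_eq_div_iff_mul_eq_mul, key]
  ac_rfl

theorem yamazaki_map_surjective_hom (S T Γ : Type*) [Monoid S] [Monoid T] [CommGroup Γ] :
    (∀ μ : Z2 (S × T) Γ,
        (fun s t => μ.1 (s, 1) (1, t) / μ.1 (1, t) (s, 1)) ∈ Pairings S T Γ) ∧
    (∀ μ ν : Z2 (S × T) Γ,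
        resFst (μ * ν) = resFst μ * resFst ν ∧
        resSnd (μ * ν) = resSnd μ * resSnd ν ∧
        (fun s t => (μ * ν).1 (s, 1) (1, t) / (μ * ν).1 (1, t) (s, 1)) =
          (fun s t => μ.1 (s, 1) (1, t) / μ.1 (1, t) (s, 1)) *
          (fun s t => ν.1 (s, 1) (1, t) / ν.1 (1, t) (s, 1))) ∧
    (∀ (ν : Z2 S Γ) (ξ : Z2 T Γ) (α : Pairings S T Γ),
        ∃ μ : Z2 (S × T) Γ, resFst μ = ν ∧ resSnd μ = ξ ∧
          (fun s t => μ.1 (s, 1) (1, t) / μ.1 (1, t) (s, 1)) = (α : S → T → Γ)) := by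
  refine ⟨?_, ?_, ?_⟩
  · intro μ
    refine ⟨fun s s' t => ?_, fun s t t' => ?_⟩
    · have h := pair_lemma (μ.2 : IsCocycle μ.1)
        (a := ((s, 1) : S × T)) (b := ((s', 1) : S × T)) (c := ((1, t) : S × T))
        (by simp [Prod.ext_iff]) (by simp [Prod.ext_iff])
      simpa [Prod.ext_iff] using h
    · have h := pair_lemma (μ.2 : IsCocycle μ.1)
        (a := ((1, t) : S × T)) (b := ((1, t') : S × T)) (c := ((s, 1) : S × T))
        (by simp [Prod.ext_iff]) (by simp [Prod.ext_iff])
      have h' := congrArg (fun x : Γ => x⁻¹) h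
      simp only [inv_div, mul_inv] at h'
      simpa [Prod.ext_iff, mul_comm] using h'
  · intro μ ν
    refine ⟨rfl, rfl, ?_⟩
    funext s t
    exact (div_mul_div_comm (μ.1 (s, 1) (1, t)) (μ.1 (1, t) (s, 1))
      (ν.1 (s, 1) (1, t)) (ν.1 (1, t) (s, 1))).symm
  · intro ν ξ α
    obtain ⟨αm1, αm2⟩ := α.2
    have hα1 : ∀ s, α.1 s 1 = 1 := fun s => by
      have := αm2 s 1 1
      rw [mul_one] at this
      exact left_eq_mul.mp this
    have hα1' : ∀ t, α.1 1 t = 1 := fun t => by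
      have := αm1 1 1 t
      rw [one_mul] at this
      exact left_eq_mul.mp this
    obtain ⟨n1, n2, n3⟩ := (ν.2 : IsCocycle ν.1)
    obtain ⟨x1, x2, x3⟩ := (ξ.2 : IsCocycle ξ.1)
    refine ⟨⟨fun p q => ν.1 p.1 q.1 * ξ.1 p.2 q.2 * α.1 p.1 q.2, ?_, ?_, ?_⟩, ?_, ?_, ?_⟩
    · rintro ⟨s1, t1⟩ ⟨s2, t2⟩ ⟨s3, t3⟩
      simp only [Prod.mk_mul_mk]
      rw [αm2 s1 t2 t3]
      calc ν.1 s1 (s2 * s3) * ξ.1 t1 (t2 * t3) * (α.1 s1 t2 * α.1 s1 t3) *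
            (ν.1 s2 s3 * ξ.1 t2 t3 * α.1 s2 t3)
          = (ν.1 s1 (s2 * s3) * ν.1 s2 s3) * (ξ.1 t1 (t2 * t3) * ξ.1 t2 t3) *
            (α.1 s1 t2 * (α.1 s1 t3 * α.1 s2 t3)) := by ac_rfl
        _ = (ν.1 s1 s2 * ν.1 (s1 * s2) s3) * (ξ.1 t1 t2 * ξ.1 (t1 * t2) t3) *
            (α.1 s1 t2 * α.1 (s1 * s2) t3) := by rw [n1, x1, ← αm1]
        _ = ν.1 s1 s2 * ξ.1 t1 t2 * α.1 s1 t2 *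
            (ν.1 (s1 * s2) s3 * ξ.1 (t1 * t2) t3 * α.1 (s1 * s2) t3) := by ac_rfl
    · rintro ⟨s, t⟩
      simp [n2, x2, hα1]
    · rintro ⟨s, t⟩
      simp [n3, x3, hα1']
    · apply Subtype.ext
      funext s s'
      show ν.1 s s' * ξ.1 1 1 * α.1 s 1 = ν.1 s s'
      rw [x2 1, hα1, mul_one, mul_one]
    · apply Subtype.ext
      funext t t'
      show ν.1 1 1 * ξ.1 t t' * α.1 1 t' = ξ.1 t t'
      rw [n2 1, hα1', mul_one, one_mul]
    · funext s t
      show (ν.1 s 1 * ξ.1 1 t * α.1 s t) / (ν.1 1 s * ξ.1 t 1 * α.1 1 1) = α.1 s t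
      simp [n2, n3, x2, x3, hα1]
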